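/- Let $n \ge 0$ and $d \ge 1$ be integers and let $a_0, \dots, a_n$ be nonnegative integers. Define the polynomial $A(t) = \sum_{i=0}^n a_i\, t^i\, (1+d t)^{n-i} + d^{n+1} t^{n+1} \in \mathbb{Z}[t]$. Then: (a) in $\mathbb{Z}[[t]]$ one has $T_d\Big( \sum_{i=0}^n a_i t^i + d^{n+1} t^{n+1} (1-d t)^{-1} \Big) = A(t)\,(1+d t)^{-(n+1)}$; (b) all coefficients of $A$ are nonnegative; (c) $A$ has degree exactly $n+1$, with leading coefficient $d^{n+1}$. (This is the computational content of the rationality of the Segre zeta function: the push-forward of the ordinary Segre class of the linear join satisfies $\iota_{N*} s(Z^{(d)}_N, \mathbb{P}^N) = \frac{A(H)}{(1+dH)^{n+1}} \cap [\mathbb{P}^N]$ with $A$ independent of $N$ and with nonnegative coefficients.) -/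

import Mathlib

open PowerSeries Finset

/-- The power series `1 + λ t`. -/
noncomputable def oneAdd {R : Type*} [CommRing R] (l : R) : PowerSeries R :=
  1 + PowerSeries.C l * PowerSeries.X

/-- The inverse power series `(1 + λ t)⁻¹`, via `invOfUnit` (constant coefficient `1`). -/
noncomputable def invOneAdd {R : Type*} [CommRing R] (l : R) : PowerSeries R :=
  PowerSeries.invOfUnit (oneAdd l) 1

/-- The tensor operation `T_λ`, defined coefficientwise:
`T_λ(∑ aᵢ tⁱ) = ∑ aᵢ tⁱ (1+λt)^{-(i+1)}`; the coefficient of `t^m` is the finite sum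
`∑_{i=0}^m aᵢ · [t^{m-i}] (1+λt)^{-(i+1)}`. -/
noncomputable def T {R : Type*} [CommRing R] (l : R) (F : PowerSeries R) : PowerSeries R :=
  PowerSeries.mk fun m => ∑ i ∈ Finset.range (m + 1),
    PowerSeries.coeff i F * PowerSeries.coeff (m - i) (invOneAdd l ^ (i + 1))

section Aux

variable {R : Type*} [CommRing R]

lemma oneAdd_mul_inv (l : R) : oneAdd l * invOneAdd l = 1 :=
  PowerSeries.mul_invOfUnit _ _ (by simp [oneAdd])

lemma one_sub_r (d : R) : 1 - PowerSeries.C d * X * invOneAdd d = invOneAdd d := by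
  have h := oneAdd_mul_inv d
  rw [oneAdd, add_mul, one_mul] at h
  linear_combination -h

lemma T_finsum (l : R) {ι : Type*} (s : Finset ι) (f : ι → PowerSeries R) :
    T l (∑ i ∈ s, f i) = ∑ i ∈ s, T l (f i) := by
  ext m
  rw [map_sum]
  simp only [T, coeff_mk, map_sum, Finset.sum_mul]
  exact Finset.sum_comm

lemma T_add (l : R) (F G : PowerSeries R) : T l (F + G) = T l F + T l G := by
  ext m
  simp [T, add_mul, Finset.sum_add_distrib]

lemma T_monomial (l a : R) (j : ℕ) :
    T l (PowerSeries.C a * X ^ j) = PowerSeries.C a * X ^ j * invOneAdd l ^ (j + 1) := by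
  ext m
  have : PowerSeries.C a * X ^ j * invOneAdd l ^ (j + 1)
      = PowerSeries.C a * (invOneAdd l ^ (j + 1) * X ^ j) := by ring
  rw [this, coeff_C_mul, coeff_mul_X_pow']
  simp only [T, coeff_mk, coeff_C_mul, coeff_X_pow]
  rw [Finset.sum_congr rfl (fun i _ => by rw [mul_ite, mul_one, mul_zero, ite_mul, zero_mul]),
    Finset.sum_ite_eq' (Finset.range (m+1)) j (fun i => a * coeff (m - i) (invOneAdd l ^ (i+1)))]
  simp [Nat.lt_succ_iff, mul_ite]

lemma invNeg (d : R) : invOneAdd (-d) = PowerSeries.mk fun i => d ^ i := by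
  have h : oneAdd (-d) * PowerSeries.mk (fun i => d ^ i) = 1 := by
    ext m
    cases m with
    | zero => simp [oneAdd]
    | succ m =>
      simp only [oneAdd, add_mul, one_mul, map_add, coeff_mk, map_mul]
      rw [mul_assoc, coeff_C_mul, coeff_succ_X_mul, coeff_mk]
      simp [pow_succ]
      ring
  calc invOneAdd (-d) = invOneAdd (-d) * (oneAdd (-d) * PowerSeries.mk fun i => d ^ i) := by
        rw [h, mul_one]
    _ = (oneAdd (-d) * invOneAdd (-d)) * PowerSeries.mk fun i => d ^ i := by ring
    _ = _ := by rw [oneAdd_mul_inv, one_mul]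

lemma geom_key (d : R) (s j : ℕ) :
    ∑ t ∈ Finset.range (s+1), PowerSeries.C (d^t) * X^t * invOneAdd d ^ (j+1+t)
      = invOneAdd d ^ j - (PowerSeries.C d * X * invOneAdd d)^(s+1) * invOneAdd d ^ j := by
  set r := PowerSeries.C d * X * invOneAdd d with hr
  have hgeom : (∑ t ∈ Finset.range (s+1), r ^ t) * (1 - r) = 1 - r^(s+1) := by
    have := geom_sum_mul r (s+1)
    linear_combination -this
  have h1 : (∑ t ∈ Finset.range (s+1), r ^ t) * invOneAdd d = 1 - r^(s+1) := by
    rw [← one_sub_r d, ← hr]; exact hgeom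
  calc ∑ t ∈ Finset.range (s+1), PowerSeries.C (d^t) * X^t * invOneAdd d ^ (j+1+t)
      = (∑ t ∈ Finset.range (s+1), r ^ t) * invOneAdd d * invOneAdd d ^ j := by
        rw [Finset.sum_mul, Finset.sum_mul]
        refine Finset.sum_congr rfl fun t _ => ?_
        rw [hr, mul_pow, mul_pow, map_pow, pow_add, pow_add, pow_one]
        ring
    _ = _ := by rw [h1]; ring

lemma sum_coeff_key (d : R) (s j : ℕ) :
    ∑ t ∈ Finset.range (s+1), d^t * coeff (s-t) (invOneAdd d ^ (j+1+t))
      = coeff s (invOneAdd d ^ j) := by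
  have := congrArg (coeff s) (geom_key d s j)
  rw [map_sum, map_sub] at this
  have hz : coeff s ((PowerSeries.C d * X * invOneAdd d)^(s+1) * invOneAdd d ^ j) = 0 := by
    have hdvd : (X : PowerSeries R)^(s+1) ∣
        (PowerSeries.C d * X * invOneAdd d)^(s+1) * invOneAdd d ^ j := by
      refine Dvd.dvd.mul_right ?_ _
      exact pow_dvd_pow_of_dvd ⟨PowerSeries.C d * invOneAdd d, by ring⟩ (s+1)
    exact (X_pow_dvd_iff.mp hdvd) s (Nat.lt_succ_self s)
  rw [hz, sub_zero] at this
  rw [← this]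
  refine Finset.sum_congr rfl fun t ht => ?_
  have hts : t ≤ s := Nat.lt_succ_iff.mp (Finset.mem_range.mp ht)
  have : PowerSeries.C (d^t) * X^t * invOneAdd d ^ (j+1+t)
      = PowerSeries.C (d^t) * (invOneAdd d ^ (j+1+t) * X^t) := by ring
  rw [this, coeff_C_mul, coeff_mul_X_pow', if_pos hts]

lemma T_tail (d c : R) (j : ℕ) :
    T d (PowerSeries.C c * X ^ j * invOneAdd (-d))
      = PowerSeries.C c * X ^ j * invOneAdd d ^ j := by
  ext m
  have hco : ∀ i : ℕ, coeff i (PowerSeries.C c * X ^ j * invOneAdd (-d))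
      = if j ≤ i then c * d ^ (i - j) else 0 := by
    intro i
    rw [invNeg]
    have : PowerSeries.C c * X ^ j * PowerSeries.mk (fun i => d ^ i)
        = PowerSeries.C c * (PowerSeries.mk (fun i => d ^ i) * X ^ j) := by ring
    rw [this, coeff_C_mul, coeff_mul_X_pow', coeff_mk]
    split <;> simp
  have hrhs : coeff m (PowerSeries.C c * X ^ j * invOneAdd d ^ j)
      = if j ≤ m then c * coeff (m - j) (invOneAdd d ^ j) else 0 := by
    have : PowerSeries.C c * X ^ j * invOneAdd d ^ j
        = PowerSeries.C c * (invOneAdd d ^ j * X ^ j) := by ring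
    rw [this, coeff_C_mul, coeff_mul_X_pow']
    split <;> simp
  simp only [T, coeff_mk, hco, hrhs, ite_mul, zero_mul]
  by_cases hjm : j ≤ m
  · rw [if_pos hjm]
    obtain ⟨s, rfl⟩ := Nat.exists_eq_add_of_le hjm
    have hsplit : Finset.range (j + s + 1) = Finset.range j ∪ Finset.Ico j (j + s + 1) := by
      rw [Finset.range_eq_Ico, Finset.range_eq_Ico]
      exact (Finset.Ico_union_Ico_eq_Ico (Nat.zero_le j) (by omega)).symm
    rw [hsplit, Finset.sum_union (by
      simp [Finset.disjoint_left, Finset.mem_range, Finset.mem_Ico]; omega)]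
    have h1 : ∑ i ∈ Finset.range j,
        (if j ≤ i then c * d ^ (i - j) * coeff (j + s - i) (invOneAdd d ^ (i + 1)) else 0)
        = 0 := Finset.sum_eq_zero fun i hi => if_neg (by
          simp only [Finset.mem_range] at hi; omega)
    rw [h1, zero_add, Finset.sum_Ico_eq_sum_range]
    have h2 : ∀ t ∈ Finset.range (j + s + 1 - j),
        (if j ≤ j + t then c * d ^ (j + t - j) * coeff (j + s - (j + t)) (invOneAdd d ^ (j + t + 1)) else 0)
        = c * (d ^ t * coeff (s - t) (invOneAdd d ^ (j + 1 + t))) := by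
      intro t ht
      rw [if_pos (Nat.le_add_right j t)]
      have e1 : j + t - j = t := by omega
      have e2 : j + s - (j + t) = s - t := by omega
      have e3 : j + t + 1 = j + 1 + t := by omega
      rw [e1, e2, e3]; ring
    rw [Finset.sum_congr rfl h2, ← Finset.mul_sum]
    have e4 : j + s + 1 - j = s + 1 := by omega
    rw [e4, sum_coeff_key d s j]
    have e5 : j + s - j = s := by omega
    rw [e5]
  · rw [if_neg hjm]
    exact Finset.sum_eq_zero fun i hi => if_neg (by
      simp only [Finset.mem_range] at hi; omega)

lemma pow_key (d : R) {k n : ℕ} (h : k ≤ n) :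
    oneAdd d ^ (n - k) * invOneAdd d ^ (n + 1) = invOneAdd d ^ (k + 1) := by
  rw [show n + 1 = (n - k) + (k + 1) by omega, pow_add, ← mul_assoc,
    ← mul_pow, oneAdd_mul_inv, one_pow, one_mul]

lemma nn_mul {p q : Polynomial ℤ} (hp : ∀ k, 0 ≤ p.coeff k) (hq : ∀ k, 0 ≤ q.coeff k) :
    ∀ k, 0 ≤ (p * q).coeff k := by
  intro k
  rw [Polynomial.coeff_mul]
  exact Finset.sum_nonneg fun x _ => mul_nonneg (hp _) (hq _)

lemma nn_pow {p : Polynomial ℤ} (hp : ∀ k, 0 ≤ p.coeff k) (n : ℕ) :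
    ∀ k, 0 ≤ (p ^ n).coeff k := by
  induction n with
  | zero => intro k; rw [pow_zero, Polynomial.coeff_one]; split <;> norm_num
  | succ n ih => rw [pow_succ]; exact nn_mul ih hp

lemma nn_C {c : ℤ} (hc : 0 ≤ c) : ∀ k, 0 ≤ (Polynomial.C c).coeff k := by
  intro k; rw [Polynomial.coeff_C]; split <;> simp [hc]

lemma nn_X : ∀ k, 0 ≤ (Polynomial.X : Polynomial ℤ).coeff k := by
  intro k; rw [Polynomial.coeff_X]; split <;> norm_num

end Aux

/-- Rationality of the Segre zeta function for ideals generated in a single degree: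
with `A(t) = ∑ aᵢ tⁱ (1+dt)^{n-i} + d^{n+1} t^{n+1}`, one has
`T_d(∑ aᵢ tⁱ + d^{n+1} t^{n+1} (1-dt)⁻¹) = A(t) (1+dt)^{-(n+1)}`, `A` has nonnegative
coefficients, and `A` has degree exactly `n+1` with leading coefficient `d^{n+1}`. -/
theorem segre_zeta_rationality (n : ℕ) (d : ℤ) (hd : 1 ≤ d) (a : Fin (n + 1) → ℤ)
    (ha : ∀ i, 0 ≤ a i) (A : Polynomial ℤ)
    (hA : A = (∑ i : Fin (n + 1), Polynomial.C (a i) * Polynomial.X ^ (i : ℕ) *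
        (1 + Polynomial.C d * Polynomial.X) ^ (n - (i : ℕ))) +
        Polynomial.C (d ^ (n + 1)) * Polynomial.X ^ (n + 1)) :
    T d ((∑ i : Fin (n + 1), PowerSeries.C (a i) * PowerSeries.X ^ (i : ℕ)) +
        PowerSeries.C (d ^ (n + 1)) * PowerSeries.X ^ (n + 1) * invOneAdd (-d)) =
      (A : PowerSeries ℤ) * invOneAdd d ^ (n + 1) ∧
    (∀ k : ℕ, 0 ≤ A.coeff k) ∧
    A.natDegree = n + 1 ∧ A.leadingCoeff = d ^ (n + 1) := by
  have hdpos : (0:ℤ) < d ^ (n + 1) := pow_pos (by omega) _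
  refine ⟨?_, ?_, ?_⟩
  · -- part (a)
    rw [T_add, T_finsum, T_tail]
    have hterm : ∀ i : Fin (n + 1), T d (PowerSeries.C (a i) * X ^ (i : ℕ))
        = PowerSeries.C (a i) * X ^ (i : ℕ) * invOneAdd d ^ ((i : ℕ) + 1) :=
      fun i => T_monomial d (a i) i
    rw [Finset.sum_congr rfl fun i _ => hterm i]
    -- coercion of A
    have hcoe : (A : PowerSeries ℤ)
        = (∑ i : Fin (n + 1), PowerSeries.C (a i) * X ^ (i : ℕ) * oneAdd d ^ (n - (i : ℕ)))
          + PowerSeries.C (d ^ (n + 1)) * X ^ (n + 1) := by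
      rw [hA, ← Polynomial.coeToPowerSeries.ringHom_apply, map_add, map_sum]
      congr 1
      · refine Finset.sum_congr rfl fun i _ => ?_
        rw [map_mul, map_mul, map_pow, map_pow, map_add, map_mul]
        simp only [Polynomial.coeToPowerSeries.ringHom_apply, Polynomial.coe_C, Polynomial.coe_X,
          map_one, oneAdd]
      · rw [map_mul]
        simp only [Polynomial.coeToPowerSeries.ringHom_apply, Polynomial.coe_C,
          Polynomial.coe_pow, Polynomial.coe_X]
    rw [hcoe, add_mul, Finset.sum_mul]
    congr 1
    refine Finset.sum_congr rfl fun i _ => ?_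
    have hin : (i : ℕ) ≤ n := Nat.lt_succ_iff.mp i.isLt
    have hkey := pow_key d hin
    calc PowerSeries.C (a i) * X ^ (i : ℕ) * invOneAdd d ^ ((i : ℕ) + 1)
        = PowerSeries.C (a i) * X ^ (i : ℕ)
          * (oneAdd d ^ (n - (i : ℕ)) * invOneAdd d ^ (n + 1)) := by rw [hkey]
      _ = PowerSeries.C (a i) * X ^ (i : ℕ) * oneAdd d ^ (n - (i : ℕ))
          * invOneAdd d ^ (n + 1) := by ring
  · -- part (b)
    intro k
    rw [hA, Polynomial.coeff_add, Polynomial.finset_sum_coeff]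
    refine add_nonneg (Finset.sum_nonneg fun i _ => ?_) ?_
    · exact nn_mul (nn_mul (nn_C (ha i)) (nn_pow nn_X _))
        (nn_pow (fun k => by
          rw [Polynomial.coeff_add, Polynomial.coeff_one]
          refine add_nonneg (by split <;> norm_num) (nn_mul (nn_C (by omega)) nn_X k)) _) k
    · exact nn_mul (nn_C hdpos.le) (nn_pow nn_X _) k
  · -- part (c)
    have hBdeg : (∑ i : Fin (n + 1), Polynomial.C (a i) * Polynomial.X ^ (i : ℕ) *
        (1 + Polynomial.C d * Polynomial.X) ^ (n - (i : ℕ))).natDegree ≤ n := by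
      refine Polynomial.natDegree_sum_le_of_forall_le _ _ fun i _ => ?_
      have hin : (i : ℕ) ≤ n := Nat.lt_succ_iff.mp i.isLt
      refine (Polynomial.natDegree_mul_le).trans ?_
      have h1 : (Polynomial.C (a i) * Polynomial.X ^ (i : ℕ)).natDegree ≤ (i : ℕ) :=
        (Polynomial.natDegree_C_mul_le _ _).trans (Polynomial.natDegree_X_pow_le _)
      have h2 : ((1 + Polynomial.C d * Polynomial.X : Polynomial ℤ) ^ (n - (i : ℕ))).natDegree
          ≤ n - (i : ℕ) := by
        refine Polynomial.natDegree_pow_le.trans ?_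
        have : (1 + Polynomial.C d * Polynomial.X : Polynomial ℤ).natDegree ≤ 1 :=
          (Polynomial.natDegree_add_le _ _).trans (by
            simp only [Polynomial.natDegree_one, max_le_iff]
            exact ⟨Nat.zero_le _,
              (Polynomial.natDegree_C_mul_le _ _).trans (by simp [Polynomial.natDegree_X])⟩)
        calc (n - (i : ℕ)) * (1 + Polynomial.C d * Polynomial.X : Polynomial ℤ).natDegree
            ≤ (n - (i : ℕ)) * 1 := Nat.mul_le_mul_left _ this
          _ = n - (i : ℕ) := Nat.mul_one _
      omega
    have hcoeff : A.coeff (n + 1) = d ^ (n + 1) := by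
      rw [hA, Polynomial.coeff_add,
        Polynomial.coeff_eq_zero_of_natDegree_lt (lt_of_le_of_lt hBdeg (Nat.lt_succ_self n)),
        zero_add, Polynomial.coeff_C_mul, Polynomial.coeff_X_pow, if_pos rfl, mul_one]
    have hdeg : A.natDegree = n + 1 := by
      refine le_antisymm ?_ (Polynomial.le_natDegree_of_ne_zero (by rw [hcoeff]; exact hdpos.ne'))
      rw [hA]
      refine (Polynomial.natDegree_add_le _ _).trans (max_le (hBdeg.trans (Nat.le_succ n)) ?_)
      exact (Polynomial.natDegree_C_mul_le _ _).trans (Polynomial.natDegree_X_pow_le _)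
    exact ⟨hdeg, by rw [Polynomial.leadingCoeff, hdeg, hcoeff]⟩
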